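/- The function N(τ) = ∫_{−∞}^τ (f₁(x) − f₀(x)) dx is strictly quasiconvex with a minimum at τ_C, and N(τ) → 0 as τ → −∞ and as τ → +∞. -/
import Mathlib


open MeasureTheory Set Filter

theorem stmt3 (f0 f1 : ℝ → ℝ) (τC : ℝ)
    (hf0pos : ∀ x, 0 < f0 x) (hf1pos : ∀ x, 0 < f1 x)
    (hf0c : Continuous f0) (hf1c : Continuous f1)
    (hf0i : Integrable f0) (hf1i : Integrable f1)
    (hf0int : ∫ x, f0 x = 1) (hf1int : ∫ x, f1 x = 1)
    (hmlrp : StrictMono (fun x => f1 x / f0 x))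
    (hτC : f1 τC = f0 τC) :
    StrictAntiOn (fun τ => ∫ x in Iic τ, (f1 x - f0 x)) (Iic τC) ∧
    StrictMonoOn (fun τ => ∫ x in Iic τ, (f1 x - f0 x)) (Ici τC) ∧
    Tendsto (fun τ => ∫ x in Iic τ, (f1 x - f0 x)) atBot (nhds 0) ∧
    Tendsto (fun τ => ∫ x in Iic τ, (f1 x - f0 x)) atTop (nhds 0) := by
  have hg : Integrable (fun x => f1 x - f0 x) := hf1i.sub hf0i
  have hgint : ∫ x, (f1 x - f0 x) = 0 := by
    rw [integral_sub hf1i hf0i, hf1int, hf0int, sub_self]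
  have hratio : (fun x => f1 x / f0 x) τC = 1 := by
    simp [hτC, (hf0pos τC).ne']
  have hneg : ∀ x, x < τC → f1 x - f0 x < 0 := by
    intro x hx
    have := hmlrp hx
    rw [hratio] at this
    have := (div_lt_one (hf0pos x)).mp this
    linarith
  have hpos : ∀ x, τC < x → 0 < f1 x - f0 x := by
    intro x hx
    have := hmlrp hx
    rw [hratio] at this
    have := (one_lt_div (hf0pos x)).mp this
    linarith
  have hdiff : ∀ a b : ℝ,
      (∫ x in Iic b, (f1 x - f0 x)) - ∫ x in Iic a, (f1 x - f0 x)
        = ∫ x in a..b, (f1 x - f0 x) :=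
    fun a b => intervalIntegral.integral_Iic_sub_Iic hg.integrableOn hg.integrableOn
  refine ⟨?_, ?_, ?_, ?_⟩
  · intro a ha b hb hab
    have key : 0 < ∫ x in a..b, (f0 x - f1 x) := by
      apply intervalIntegral.intervalIntegral_pos_of_pos_on ((hf0i.sub hf1i).intervalIntegrable)
        (fun x hx => ?_) hab
      have hx' : x < τC := lt_of_lt_of_le hx.2 hb
      have := hneg x hx'
      simp only [Pi.sub_apply]
      linarith
    have : (∫ x in a..b, (f0 x - f1 x)) = -(∫ x in a..b, (f1 x - f0 x)) := by
      rw [← intervalIntegral.integral_neg]; simp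
    rw [this] at key
    have := hdiff a b
    simp only
    linarith
  · intro a ha b hb hab
    have key : 0 < ∫ x in a..b, (f1 x - f0 x) := by
      apply intervalIntegral.intervalIntegral_pos_of_pos_on (hg.intervalIntegrable)
        (fun x hx => ?_) hab
      exact hpos x (lt_of_le_of_lt ha hx.1)
    have := hdiff a b
    simp only
    linarith
  · have hcover : AECover (volume : Measure ℝ) atBot (fun τ : ℝ => Ioi τ) :=
      aecover_Ioi tendsto_id
    have h1 : Tendsto (fun τ : ℝ => ∫ x in Ioi τ, (f1 x - f0 x)) atBot
        (nhds (∫ x, (f1 x - f0 x))) :=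
      hcover.integral_tendsto_of_countably_generated hg
    rw [hgint] at h1
    have heq : ∀ τ : ℝ, (∫ x in Iic τ, (f1 x - f0 x))
        = 0 - ∫ x in Ioi τ, (f1 x - f0 x) := by
      intro τ
      have := intervalIntegral.integral_Iic_add_Ioi (b := τ) hg.integrableOn hg.integrableOn
      rw [hgint] at this
      linarith
    simp only [heq]
    simpa using (tendsto_const_nhds (x := (0:ℝ))).sub h1
  · have hcover : AECover (volume : Measure ℝ) atTop (fun τ : ℝ => Iic τ) :=
      aecover_Iic tendsto_id
    have := hcover.integral_tendsto_of_countably_generated hg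
    rwa [hgint] at this
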